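/- Let f be a formal power series, p ≥ 0, q ≥ 1 integers with det(H_q^{(f)}(a_{p−q+1})) ≠ 0. Then there exists a unique rational function [p/q]_f(z) = (Σ_{ν=0}^p n_ν z^ν)/(Σ_{ν=0}^q d_ν z^ν) with d_0 = 1 whose Taylor expansion Σ b_ν z^ν around 0 satisfies b_ν = a_ν for all ν = 0, 1, …, p + q. -/

import Mathlib

/-- The q×q Hankel matrix of the coefficient sequence `a` at `a_{p-q+1}`:
entry (i,j) (0-based) is `a_{p-q+i+j+1}`, with the convention `a_ν = 0` for `ν < 0`. -/
def padeHankel (a : ℕ → ℂ) (p q : ℕ) : Matrix (Fin q) (Fin q) ℂ :=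
  Matrix.of fun i j =>
    if h : 0 ≤ (p : ℤ) - q + i + j + 1 then a ((p : ℤ) - q + i + j + 1).toNat else 0

/-- `N/D` is a Padé approximant of type `(p,q)` to the formal power series with
coefficients `a`: deg N ≤ p, deg D ≤ q, D(0) = 1, and the Taylor expansion of `N/D`
at 0 agrees with `a` up to order `p+q`. -/
def IsPadeApprox (a : ℕ → ℂ) (p q : ℕ) (N D : Polynomial ℂ) : Prop :=
  N.natDegree ≤ p ∧ D.natDegree ≤ q ∧ D.coeff 0 = 1 ∧
  ∃ ps : FormalMultilinearSeries ℂ ℂ ℂ,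
    HasFPowerSeriesAt (fun z => N.eval z / D.eval z) ps 0 ∧
    ∀ ν ≤ p + q, ps.coeff ν = a ν



noncomputable section PadeAux

open Finset

/-- Cauchy-product convolution of two coefficient sequences. -/
def pconv (u v : ℕ → ℂ) (n : ℕ) : ℂ := ∑ j ∈ Finset.range (n + 1), u j * v (n - j)

lemma poly_hasSum (P : Polynomial ℂ) (y : ℂ) :
    HasSum (fun n => P.coeff n * y ^ n) (P.eval y) := by
  have h0 : ∀ n ∉ Finset.range (P.natDegree + 1), P.coeff n * y ^ n = 0 := by
    intro n hn
    rw [Polynomial.coeff_eq_zero_of_natDegree_lt (by simp at hn; omega), zero_mul]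
  have : HasSum (fun n => P.coeff n * y ^ n) (∑ n ∈ Finset.range (P.natDegree + 1), P.coeff n * y ^ n) :=
    hasSum_sum_of_ne_finset_zero h0
  rwa [← Polynomial.eval_eq_sum_range] at this

lemma pconv_hasSum (P : Polynomial ℂ) (c : ℕ → ℂ) {y s : ℂ}
    (hc : HasSum (fun n => c n * y ^ n) s) :
    HasSum (fun n => pconv P.coeff c n * y ^ n) (P.eval y * s) := by
  set F : ℕ → ℕ → ℂ := fun j n => if j ≤ n then P.coeff j * c (n - j) * y ^ n else 0 with hF
  have hFsum : ∀ j : ℕ, HasSum (F j) (P.coeff j * y ^ j * s) := by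
    intro j
    have h1 : HasSum (fun n => F j (n + j)) (P.coeff j * y ^ j * s) := by
      have h2 := hc.mul_left (P.coeff j * y ^ j)
      rw [show (fun n => F j (n + j)) = fun i => P.coeff j * y ^ j * (c i * y ^ i) from
        funext fun n => by
          simp only [hF, if_pos (Nat.le_add_left j n), Nat.add_sub_cancel]
          ring]
      exact h2
    rw [hasSum_nat_add_iff j] at h1
    have hz : ∑ i ∈ Finset.range j, F j i = 0 :=
      Finset.sum_eq_zero fun i hi => by
        simp only [hF]; rw [if_neg (by simp at hi; omega)]
    rwa [hz, add_zero] at h1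
  have hsum := hasSum_sum (f := F) (s := Finset.range (P.natDegree + 1))
    (fun j _ => hFsum j)
  have key : ∀ n, ∑ j ∈ Finset.range (P.natDegree + 1), F j n = pconv P.coeff c n * y ^ n := by
    intro n
    have e1 : ∑ j ∈ Finset.range (P.natDegree + 1), F j n
        = ∑ j ∈ Finset.range (max P.natDegree n + 1), F j n := by
      apply Finset.sum_subset (by apply Finset.range_subset_range.2; omega)
      intro j hj hj'
      have : P.natDegree < j := by simp at hj hj'; omega
      simp [hF, Polynomial.coeff_eq_zero_of_natDegree_lt this]
    have e2 : pconv P.coeff c n * y ^ n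
        = ∑ j ∈ Finset.range (max P.natDegree n + 1), F j n := by
      rw [pconv, Finset.sum_mul]
      rw [Finset.sum_congr rfl (g := fun j => F j n) (fun j hj => by
        simp only [hF]; rw [if_pos (by simp at hj; omega)])]
      apply Finset.sum_subset (by apply Finset.range_subset_range.2; omega)
      intro j hj hj'
      simp only [hF]; rw [if_neg (by simp at hj hj'; omega)]
    rw [e1, ← e2]
  have hrhs : ∑ j ∈ Finset.range (P.natDegree + 1), P.coeff j * y ^ j * s
      = P.eval y * s := by
    rw [← Finset.sum_mul, ← Polynomial.eval_eq_sum_range]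
  rw [hrhs] at hsum
  exact (funext key : (fun n => ∑ j ∈ Finset.range (P.natDegree + 1), F j n) = _) ▸ hsum

lemma ofScalars_coeff' (c : ℕ → ℂ) (n : ℕ) :
    (FormalMultilinearSeries.ofScalars ℂ c).coeff n = c n := by
  show (FormalMultilinearSeries.ofScalars ℂ c) n (fun _ => 1) = c n
  rw [FormalMultilinearSeries.ofScalars_apply_eq, one_pow, smul_eq_mul, mul_one]

lemma hasFPowerSeriesAt_ofScalars' (g : ℂ → ℂ) (c : ℕ → ℂ)
    (h : ∀ᶠ y in nhds (0 : ℂ), HasSum (fun n => c n * y ^ n) (g y)) :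
    HasFPowerSeriesAt g (FormalMultilinearSeries.ofScalars ℂ c) 0 := by
  rw [hasFPowerSeriesAt_iff]
  filter_upwards [h] with z hz
  simpa [ofScalars_coeff', smul_eq_mul, mul_comm, zero_add] using hz

lemma hasSum_coeff_unique {c c' : ℕ → ℂ} {g : ℂ → ℂ}
    (h : ∀ᶠ y in nhds (0 : ℂ), HasSum (fun n => c n * y ^ n) (g y))
    (h' : ∀ᶠ y in nhds (0 : ℂ), HasSum (fun n => c' n * y ^ n) (g y)) : c = c' := by
  have := (hasFPowerSeriesAt_ofScalars' g c h).eq_formalMultilinearSeries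
    (hasFPowerSeriesAt_ofScalars' g c' h')
  funext n
  rw [← ofScalars_coeff' c n, this, ofScalars_coeff']

end PadeAux

section PadeKey

open Finset

/-- Key convolution identity: if `N/D` has power series `ps` at `0` and `D(0)=1`,
then `D.coeff ⋆ ps.coeff = N.coeff`. -/
lemma pade_key {Np Dp : Polynomial ℂ} {ps : FormalMultilinearSeries ℂ ℂ ℂ}
    (hD : Dp.coeff 0 = 1)
    (hg : HasFPowerSeriesAt (fun z => Np.eval z / Dp.eval z) ps 0) :
    ∀ n, pconv Dp.coeff ps.coeff n = Np.coeff n := by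
  have hD0 : Dp.eval 0 ≠ 0 := by
    rw [← Polynomial.coeff_zero_eq_eval_zero, hD]; exact one_ne_zero
  have hDne : ∀ᶠ z in nhds (0 : ℂ), Polynomial.eval z Dp ≠ 0 :=
    (Polynomial.continuous Dp).continuousAt.eventually_ne hD0
  have hsum_g : ∀ᶠ z in nhds (0 : ℂ),
      HasSum (fun n => ps.coeff n * z ^ n) (Np.eval z / Dp.eval z) := by
    filter_upwards [hasFPowerSeriesAt_iff.mp hg] with z hz
    simpa [smul_eq_mul, mul_comm, zero_add] using hz
  have h1 : ∀ᶠ z in nhds (0 : ℂ),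
      HasSum (fun n => pconv Dp.coeff ps.coeff n * z ^ n) (Np.eval z) := by
    filter_upwards [hsum_g, hDne] with z hz hne
    have h2 := pconv_hasSum Dp ps.coeff hz
    have h3 : Dp.eval z * (Np.eval z / Dp.eval z) = Np.eval z := by
      field_simp
    rwa [h3] at h2
  have h2 : ∀ᶠ z in nhds (0 : ℂ),
      HasSum (fun n => Np.coeff n * z ^ n) (Np.eval z) :=
    Filter.Eventually.of_forall fun z => poly_hasSum Np z
  exact fun n => congrFun (hasSum_coeff_unique h1 h2) n

/-- Recursion: if `d ⋆ v` and `d ⋆ w` agree up to `m` and `d 0 = 1`, then `v = w` up to `m`. -/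
lemma pconv_cancel {d v w : ℕ → ℂ} (hd : d 0 = 1) {m : ℕ}
    (h : ∀ ν ≤ m, pconv d v ν = pconv d w ν) : ∀ ν ≤ m, v ν = w ν := by
  intro ν
  induction ν using Nat.strong_induction_on with
  | _ ν ih =>
    intro hν
    have h1 := h ν hν
    rw [pconv, pconv, Finset.sum_range_succ', Finset.sum_range_succ'] at h1
    have ht : ∑ j ∈ Finset.range ν, d (j + 1) * v (ν - (j + 1))
        = ∑ j ∈ Finset.range ν, d (j + 1) * w (ν - (j + 1)) :=
      Finset.sum_congr rfl fun j hj => by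
        rw [ih (ν - (j + 1)) (by simp at hj; omega) (by omega)]
    rw [ht] at h1
    have h2 := add_left_cancel h1
    simpa [hd] using h2

end PadeKey



noncomputable section DenomConstruction

open Finset Polynomial

variable (a : ℕ → ℂ) (p q : ℕ)

/-- Solution vector of the Hankel system. -/
def padeX : Fin q → ℂ :=
  (padeHankel a p q)⁻¹.mulVec fun i : Fin q => -(a (p + 1 + (i : ℕ)))

/-- Denominator coefficients. -/
def padeD : ℕ → ℂ := fun j =>
  if h0 : j = 0 then 1 else if h : j ≤ q then padeX a p q ⟨q - j, by omega⟩ else 0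

/-- The denominator polynomial. -/
def padeDpoly : Polynomial ℂ :=
  ∑ j ∈ Finset.range (q + 1), Polynomial.C (padeD a p q j) * Polynomial.X ^ j

lemma padeDpoly_coeff (k : ℕ) :
    (padeDpoly a p q).coeff k = if k ≤ q then padeD a p q k else 0 := by
  simp only [padeDpoly, Polynomial.finset_sum_coeff, Polynomial.coeff_C_mul,
    Polynomial.coeff_X_pow, mul_ite, mul_one, mul_zero, Finset.sum_ite_eq,
    Finset.mem_range, Nat.lt_succ_iff]

lemma padeDpoly_natDegree : (padeDpoly a p q).natDegree ≤ q :=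
  Polynomial.natDegree_sum_le_of_forall_le _ _ fun j hj =>
    (Polynomial.natDegree_C_mul_X_pow_le _ _).trans (by simp at hj; omega)

lemma padeDpoly_coeff_zero : (padeDpoly a p q).coeff 0 = 1 := by
  rw [padeDpoly_coeff]; simp [padeD]

lemma padeDpoly_vanish (hq : 1 ≤ q) (hdet : (padeHankel a p q).det ≠ 0) :
    ∀ ν, p + 1 ≤ ν → ν ≤ p + q → pconv (padeDpoly a p q).coeff a ν = 0 := by
  intro ν hν1 hν2
  have hH : IsUnit (padeHankel a p q).det := isUnit_iff_ne_zero.mpr hdet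
  have hx : (padeHankel a p q).mulVec (padeX a p q)
      = fun i : Fin q => -(a (p + 1 + (i : ℕ))) := by
    rw [padeX, Matrix.mulVec_mulVec, Matrix.mul_nonsing_inv _ hH, Matrix.one_mulVec]
  set i : Fin q := ⟨ν - (p + 1), by omega⟩ with hidef
  have hiv : (i : ℕ) = ν - (p + 1) := rfl
  set u : ℕ → ℂ := fun j =>
    (padeDpoly a p q).coeff j * (if j ≤ ν then a (ν - j) else 0) with hu
  -- step A
  have eA : pconv (padeDpoly a p q).coeff a ν = ∑ j ∈ Finset.range (q + 1), u j := by
    have e1 : pconv (padeDpoly a p q).coeff a ν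
        = ∑ j ∈ Finset.range (ν + q + 1), u j := by
      rw [pconv]
      rw [Finset.sum_congr rfl (g := fun j => u j) (fun j hj => by
        simp only [hu]; rw [if_pos (by simp at hj; omega)])]
      apply Finset.sum_subset (by apply Finset.range_subset_range.2; omega)
      intro j hj hj'
      simp only [hu]; rw [if_neg (by simp at hj hj'; omega), mul_zero]
    have e2 : ∑ j ∈ Finset.range (q + 1), u j = ∑ j ∈ Finset.range (ν + q + 1), u j := by
      apply Finset.sum_subset (by apply Finset.range_subset_range.2; omega)
      intro j hj hj'
      have hnot : ¬ j ≤ q := by simp at hj'; omega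
      simp only [hu, padeDpoly_coeff, if_neg hnot, zero_mul]
    rw [e1, ← e2]
  -- step B
  have eB : ∑ j ∈ Finset.range (q + 1), u j
      = (∑ j ∈ Finset.range q, u (j + 1)) + u 0 := Finset.sum_range_succ' u q
  have hu0 : u 0 = a ν := by
    simp only [hu]
    rw [padeDpoly_coeff_zero, if_pos (Nat.zero_le ν), Nat.sub_zero, one_mul]
  -- step C: reflect
  have eC : ∑ j ∈ Finset.range q, u (j + 1) = ∑ j ∈ Finset.range q, u (q - j) := by
    rw [← Finset.sum_range_reflect (fun j => u (j + 1)) q]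
    exact Finset.sum_congr rfl fun j hj => by
      congr 1; simp at hj; omega
  -- step D: identify with the Hankel pairing
  have eD : ∑ j ∈ Finset.range q, u (q - j)
      = ∑ k : Fin q, padeHankel a p q i k * padeX a p q k := by
    set f : ℕ → ℂ := fun k =>
      if h : k < q then padeHankel a p q i ⟨k, h⟩ * padeX a p q ⟨k, h⟩ else 0 with hf
    have e3 : ∑ k : Fin q, padeHankel a p q i k * padeX a p q k = ∑ k : Fin q, f k :=
      Finset.sum_congr rfl fun k _ => by simp only [hf]; rw [dif_pos k.isLt]
    rw [e3, Fin.sum_univ_eq_sum_range f q]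
    refine Finset.sum_congr rfl fun j hj => ?_
    have hjq : j < q := by simpa using hj
    simp only [hf]
    rw [dif_pos hjq]
    -- D coefficient equals x ⟨j⟩
    have hcoe : (padeDpoly a p q).coeff (q - j) = padeX a p q ⟨j, hjq⟩ := by
      rw [padeDpoly_coeff, if_pos (by omega)]
      simp only [padeD]
      rw [dif_neg (by omega), dif_pos (by omega)]
      congr 1
      exact Fin.ext (by simp; omega)
    -- Hankel entry equals the truncated coefficient
    have hHank : (if q - j ≤ ν then a (ν - (q - j)) else 0)
        = padeHankel a p q i ⟨j, hjq⟩ := by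
      simp only [padeHankel, Matrix.of_apply, hiv]
      by_cases hc : q - j ≤ ν
      · rw [if_pos hc, dif_pos (by push_cast; omega)]
        congr 1
        push_cast
        omega
      · rw [if_neg hc, dif_neg (by push_cast; omega)]
    simp only [hu]
    rw [hcoe, hHank, mul_comm]
  have eE : ∑ k : Fin q, padeHankel a p q i k * padeX a p q k = -(a ν) := by
    have : ∑ k : Fin q, padeHankel a p q i k * padeX a p q k
        = (padeHankel a p q).mulVec (padeX a p q) i := by
      simp [Matrix.mulVec, dotProduct]
    rw [this, hx]
    show -a (p + 1 + (i : ℕ)) = -(a ν)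
    have : p + 1 + (i : ℕ) = ν := by omega
    rw [this]
  rw [eA, eB, eC, eD, eE, hu0]
  ring

end DenomConstruction


section MainAux

open Finset

/-- For any Padé approximant pair, the convolution of the denominator coefficients with
`a` reproduces the numerator coefficients up to order `p+q`. -/
lemma isPadeApprox_pconv {a : ℕ → ℂ} {p q : ℕ} {N D : Polynomial ℂ}
    (h : IsPadeApprox a p q N D) : ∀ ν ≤ p + q, pconv D.coeff a ν = N.coeff ν := by
  obtain ⟨hN, hD, hD0, ps, hps, hcoeff⟩ := h
  intro ν hν
  have key := pade_key hD0 hps ν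
  rw [← key, pconv, pconv]
  refine Finset.sum_congr rfl fun j hj => ?_
  rw [hcoeff (ν - j) (by omega)]

/-- Transfer of coefficients through multiplication in power series. -/
lemma pconv_coeff_powerSeries (P : Polynomial ℂ) (a : ℕ → ℂ) (ν : ℕ) :
    (PowerSeries.coeff ν) ((P : PowerSeries ℂ) * PowerSeries.mk a) = pconv P.coeff a ν := by
  rw [PowerSeries.coeff_mul, Finset.Nat.sum_antidiagonal_eq_sum_range_succ_mk, pconv]
  exact Finset.sum_congr rfl fun j hj => by
    rw [Polynomial.coeff_coe, PowerSeries.coeff_mk]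

end MainAux

theorem pade_exists_unique (a : ℕ → ℂ) (p q : ℕ) (hq : 1 ≤ q)
    (hdet : (padeHankel a p q).det ≠ 0) :
    ∃ N D : Polynomial ℂ, IsPadeApprox a p q N D ∧
      ∀ N' D' : Polynomial ℂ, IsPadeApprox a p q N' D' → N' * D = N * D' := by
  classical
  set D : Polynomial ℂ := padeDpoly a p q with hDdef
  have hDdeg : D.natDegree ≤ q := padeDpoly_natDegree a p q
  have hD0 : D.coeff 0 = 1 := padeDpoly_coeff_zero a p q
  -- numerator
  set N : Polynomial ℂ :=
    ∑ ν ∈ Finset.range (p + 1), Polynomial.C (pconv D.coeff a ν) * Polynomial.X ^ ν with hNdef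
  have hNcoeff : ∀ k, N.coeff k = if k ≤ p then pconv D.coeff a k else 0 := by
    intro k
    simp only [hNdef, Polynomial.finset_sum_coeff, Polynomial.coeff_C_mul,
      Polynomial.coeff_X_pow, mul_ite, mul_one, mul_zero, Finset.sum_ite_eq,
      Finset.mem_range, Nat.lt_succ_iff]
  have hNdeg : N.natDegree ≤ p :=
    Polynomial.natDegree_sum_le_of_forall_le _ _ fun j hj =>
      (Polynomial.natDegree_C_mul_X_pow_le _ _).trans (by simp at hj; omega)
  -- the crucial property of N : its coefficients are the convolution up to p+q
  have hNfull : ∀ ν ≤ p + q, pconv D.coeff a ν = N.coeff ν := by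
    intro ν hν
    rw [hNcoeff]
    by_cases hc : ν ≤ p
    · rw [if_pos hc]
    · rw [if_neg hc, padeDpoly_vanish a p q hq hdet ν (by omega) hν]
  -- analyticity
  have hDev0 : Polynomial.eval 0 D ≠ 0 := by
    rw [← Polynomial.coeff_zero_eq_eval_zero, hD0]; exact one_ne_zero
  have hAn : AnalyticAt ℂ (fun z => N.eval z / D.eval z) 0 := by
    have h1 : AnalyticAt ℂ (fun z => N.eval z) 0 :=
      (AnalyticOnNhd.eval_polynomial (𝕜 := ℂ) N) 0 (Set.mem_univ 0)
    have h2 : AnalyticAt ℂ (fun z => D.eval z) 0 :=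
      (AnalyticOnNhd.eval_polynomial (𝕜 := ℂ) D) 0 (Set.mem_univ 0)
    exact h1.div h2 hDev0
  obtain ⟨ps, hps⟩ := hAn
  have hkey := pade_key hD0 hps
  have hpsc : ∀ ν ≤ p + q, ps.coeff ν = a ν := by
    refine pconv_cancel hD0 (fun ν hν => ?_)
    rw [hkey ν, ← hNfull ν hν]
  have hPade : IsPadeApprox a p q N D := ⟨hNdeg, hDdeg, hD0, ps, hps, hpsc⟩
  refine ⟨N, D, hPade, ?_⟩
  intro N' D' hPade'
  -- both satisfy the convolution identity
  have hconv : ∀ ν ≤ p + q, pconv D.coeff a ν = N.coeff ν := isPadeApprox_pconv hPade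
  have hconv' : ∀ ν ≤ p + q, pconv D'.coeff a ν = N'.coeff ν := isPadeApprox_pconv hPade'
  obtain ⟨hN'deg, hD'deg, _, _⟩ := hPade'
  -- compare coefficients
  apply Polynomial.ext
  intro k
  by_cases hk : k ≤ p + q
  · -- work in power series
    have e1 : (N' * D).coeff k
        = (PowerSeries.coeff k) (((D' : PowerSeries ℂ) * PowerSeries.mk a) * (D : PowerSeries ℂ)) := by
      rw [Polynomial.coeff_mul, PowerSeries.coeff_mul]
      refine Finset.sum_congr rfl fun x hx => ?_
      rw [Finset.HasAntidiagonal.mem_antidiagonal] at hx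
      rw [Polynomial.coeff_coe]
      congr 1
      rw [pconv_coeff_powerSeries, hconv' x.1 (by omega)]
    have e2 : (N * D').coeff k
        = (PowerSeries.coeff k) (((D : PowerSeries ℂ) * PowerSeries.mk a) * (D' : PowerSeries ℂ)) := by
      rw [Polynomial.coeff_mul, PowerSeries.coeff_mul]
      refine Finset.sum_congr rfl fun x hx => ?_
      rw [Finset.HasAntidiagonal.mem_antidiagonal] at hx
      rw [Polynomial.coeff_coe]
      congr 1
      rw [pconv_coeff_powerSeries, hconv x.1 (by omega)]
    rw [e1, e2]
    congr 1
    ring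
  · have hb1 := Polynomial.natDegree_mul_le (p := N') (q := D)
    have hb2 := Polynomial.natDegree_mul_le (p := N) (q := D')
    have h1 : (N' * D).natDegree < k := by omega
    have h2 : (N * D').natDegree < k := by omega
    rw [Polynomial.coeff_eq_zero_of_natDegree_lt h1, Polynomial.coeff_eq_zero_of_natDegree_lt h2]
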